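/- Let π : Ũ ⟶ U be a universal map in a finitely complete category with Id-type and Π-type structures. Suppose X ↠ E ↠ B is a composable pair of π-fibrations. Then there exists a transport map over Id_B(E): a morphism transport : ev₀^*X ⟶ ev₁^*X over Id_B(E) such that the pullback of transport along refl : E ⟶ Id_B(E) is the identity on X, where ev₀, ev₁ : Id_B(E) ⟶ E are the two endpoint evaluations and refl is the unit of the Id-type factorization E ⟶ Id_B(E) ⟶ E ×_B E of the diagonal. -/

import Mathlib

open CategoryTheory CategoryTheory.Limits

/-- A map is a `π`-fibration if it arises as a pullback of the universal map `π`. -/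
def IsPiFib {C : Type*} [Category C] {Ut U : C} (π : Ut ⟶ U) {E B : C} (p : E ⟶ B) : Prop :=
  ∃ (c : B ⟶ U) (t : E ⟶ Ut), IsPullback t p π c

/-- Let `π : Ũ ⟶ U` be a universal map with Id-type and Π-type structures,
and let `X ↠ E ↠ B` be a composable pair of `π`-fibrations.  Given the Id-type
factorization `refl : E ⟶ Id_B(E)`, `ev_∂ : Id_B(E) ↠ E ×_B E` of the diagonal (with
`ev_∂` a `π`-fibration, and with the J-elimination/Π-type consequence that pullbacks of
`refl` along arbitrary maps lift against `π`-fibrations), there is a transport map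
`transport : ev₀^*X ⟶ ev₁^*X` over `Id_B(E)` whose pullback along `refl` is the
identity of `X` (expressed via the canonical maps `X ⟶ ev₀^*X`, `X ⟶ ev₁^*X`). -/
theorem transport_exists {C : Type*} [Category C] [HasFiniteLimits C]
    {Ut U : C} (π : Ut ⟶ U)
    {B E X : C} (q : E ⟶ B) (p : X ⟶ E)
    (hq : IsPiFib π q) (hp : IsPiFib π p)
    (idE : C) (refl : E ⟶ idE) (evb : idE ⟶ pullback q q)
    (hfact : refl ≫ evb = pullback.lift (𝟙 E) (𝟙 E) rfl)
    (hevb : IsPiFib π evb)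
    (hJ : ∀ {Z W : C} (j : Z ⟶ W) (a : Z ⟶ E) (b : W ⟶ idE), IsPullback a j refl b →
      ∀ {P Q : C} (w : P ⟶ Q), IsPiFib π w →
        ∀ (top : Z ⟶ P) (bot : W ⟶ Q), top ≫ w = j ≫ bot →
          ∃ l : W ⟶ P, j ≫ l = top ∧ l ≫ w = bot) :
    ∃ t : pullback p (evb ≫ pullback.fst q q) ⟶ pullback p (evb ≫ pullback.snd q q),
      t ≫ pullback.snd p (evb ≫ pullback.snd q q) = pullback.snd p (evb ≫ pullback.fst q q) ∧
      pullback.lift (𝟙 X) (p ≫ refl) (by simp [reassoc_of% hfact, pullback.lift_fst, pullback.lift_snd]) ≫ t =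
        pullback.lift (𝟙 X) (p ≫ refl) (by simp [reassoc_of% hfact, pullback.lift_fst, pullback.lift_snd]) := by
  classical
  set g0 := evb ≫ pullback.fst q q with hg0
  set g1 := evb ≫ pullback.snd q q with hg1
  have hr0 : refl ≫ g0 = 𝟙 E := by simp [hg0, reassoc_of% hfact, pullback.lift_fst]
  have hr1 : refl ≫ g1 = 𝟙 E := by simp [hg1, reassoc_of% hfact, pullback.lift_snd]
  have hj0 : (𝟙 X) ≫ p = (p ≫ refl) ≫ g0 := by
    rw [Category.id_comp, Category.assoc, hr0, Category.comp_id]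
  have hj1 : (𝟙 X) ≫ p = (p ≫ refl) ≫ g1 := by
    rw [Category.id_comp, Category.assoc, hr1, Category.comp_id]
  set j : X ⟶ pullback p g0 := pullback.lift (𝟙 X) (p ≫ refl) hj0 with hj
  -- X is the pullback of refl along pullback.snd p g0
  have hbot : IsPullback (pullback.snd p g0) (pullback.fst p g0) g0 p :=
    (IsPullback.of_hasPullback p g0).flip
  have hbig : IsPullback p (j ≫ pullback.fst p g0) (refl ≫ g0) p := by
    simp only [hj, pullback.lift_fst, hr0]
    exact IsPullback.of_vert_isIso ⟨by simp⟩
  have hsq : IsPullback p j refl (pullback.snd p g0) := by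
    apply IsPullback.of_bot (v₂₁ := pullback.fst p g0) ?_ ?_ hbot
    · exact hbig
    · simp [hj, pullback.lift_snd]
  -- the fibration to lift against
  have hw : IsPiFib π (pullback.snd p g1) := by
    obtain ⟨c, t, h⟩ := hp
    exact ⟨g1 ≫ c, pullback.fst p g1 ≫ t, (IsPullback.of_hasPullback p g1).paste_horiz h⟩
  have hcomm : pullback.lift (𝟙 X) (p ≫ refl) hj1 ≫ pullback.snd p g1 =
      j ≫ pullback.snd p g0 := by simp [hj, pullback.lift_snd]
  obtain ⟨l, hl1, hl2⟩ := hJ j p (pullback.snd p g0) hsq (pullback.snd p g1) hw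
    (pullback.lift (𝟙 X) (p ≫ refl) hj1) (pullback.snd p g0) hcomm
  exact ⟨l, hl2, hl1⟩
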